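/- Let Σ be an F-spanning set for Γ and S ⊆ Γ. Then S is (Σ,F)-automatic if and only if its (Σ,F)-kernel is finite, i.e., the collection of sets S_{x_0⋯x_{m−1}} := {x ∈ Γ : x_0 + F x_1 + ⋯ + F^{m−1} x_{m−1} + F^m x ∈ S}, as m ranges over ℕ and x_0,…,x_{m−1} over Σ (with S_∅ = S), contains only finitely many distinct subsets of Γ. -/

import Mathlib

open Pointwise

/-- `[w]_F`: the base-`F` evaluation of a word `w = x₀x₁⋯x_m`,
namely `x₀ + F x₁ + ⋯ + F^m x_m`, with `[∅]_F = 0`. -/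
def wordVal {Γ : Type*} [AddCommGroup Γ] (F : AddMonoid.End Γ) : List Γ → Γ
  | [] => 0
  | x :: xs => x + F (wordVal F xs)

/-- `Sig` is an `F`-spanning set for `Γ`. -/
def IsSpanningSet {Γ : Type*} [AddCommGroup Γ] (F : AddMonoid.End Γ) (Sig : Set Γ) : Prop :=
  Sig.Finite ∧
  (0 : Γ) ∈ Sig ∧ (∀ x ∈ Sig, -x ∈ Sig) ∧
  (∀ x : Γ, F x ∈ Sig → x ∈ Sig) ∧
  (∀ x : Γ, ∃ w : List Γ, (∀ y ∈ w, y ∈ Sig) ∧ wordVal F w = x) ∧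
  (∀ x₁ ∈ Sig, ∀ x₂ ∈ Sig, ∀ x₃ ∈ Sig, ∀ x₄ ∈ Sig, ∀ x₅ ∈ Sig,
    ∃ t ∈ Sig, ∃ t' ∈ Sig, x₁ + x₂ + x₃ + x₄ + x₅ = t + F t') ∧
  (∀ x₁ ∈ Sig, ∀ x₂ ∈ Sig, ∀ x₃ ∈ Sig,
    (∃ y : Γ, x₁ + x₂ + x₃ = F y) → ∃ t ∈ Sig, x₁ + x₂ + x₃ = F t)

/-- `S` is `(Σ,F)`-automatic: the language of words over `Σ` whose base-`F` value lies
in `S` is a regular language. -/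
def IsSFAutomatic {Γ : Type*} [AddCommGroup Γ] (F : AddMonoid.End Γ) (Sig : Set Γ)
    (S : Set Γ) : Prop :=
  Language.IsRegular {w : List ↥Sig | wordVal F (w.map Subtype.val) ∈ S}

/-- `S ⊆ Γ` is `(Σ,F)`-automatic if and only if its `(Σ,F)`-kernel,
the collection of sets `S_w = {x : [w]_F + F^{length w} x ∈ S}` for words `w` over `Σ`,
is finite. -/
lemma wordVal_append {Γ : Type*} [AddCommGroup Γ] (F : AddMonoid.End Γ) (w v : List Γ) :
    wordVal F (w ++ v) = wordVal F w + (F ^ w.length) (wordVal F v) := by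
  induction w with
  | nil => simp [wordVal]
  | cons x xs ih =>
      have h1 : wordVal F (x :: xs ++ v) = x + F (wordVal F (xs ++ v)) := rfl
      rw [h1, ih, map_add, List.length_cons, pow_succ']
      have h2 : (F * F ^ xs.length) (wordVal F v) = F ((F ^ xs.length) (wordVal F v)) := rfl
      rw [h2]
      simp [wordVal, add_assoc]


theorem isSFAutomatic_iff_kernel_finite {Γ : Type*} [AddCommGroup Γ]
    (F : AddMonoid.End Γ) (Sig : Set Γ) (hSig : IsSpanningSet F Sig) (S : Set Γ) :
    IsSFAutomatic F Sig S ↔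
      {T : Set Γ | ∃ w : List Γ, (∀ y ∈ w, y ∈ Sig) ∧
        T = {x : Γ | wordVal F w + (F ^ w.length) x ∈ S}}.Finite := by
  obtain ⟨-, -, -, -, hspan, -, -⟩ := hSig
  constructor
  · rintro ⟨σ, hfin, M, hM⟩
    set f : σ → Set Γ := fun q =>
      {x | ∃ v : List ↥Sig, wordVal F (v.map Subtype.val) = x ∧ M.evalFrom q v ∈ M.accept}
      with hf
    apply (Set.finite_range f).subset
    rintro T ⟨w, hw, rfl⟩
    set u : List ↥Sig := w.attach.map (fun y => ⟨y.1, hw y.1 y.2⟩) with hu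
    have humap : u.map Subtype.val = w := by
      simp [hu]
    have hulen : u.length = w.length := by
      simp [hu]
    refine ⟨M.eval u, ?_⟩
    ext x
    constructor
    · rintro ⟨v, hv, hacc⟩
      have hmem : (u ++ v) ∈ M.accepts := by
        rw [DFA.mem_accepts]
        show M.evalFrom M.start (u ++ v) ∈ M.accept
        rw [M.evalFrom_of_append]
        exact hacc
      rw [hM] at hmem
      have key : wordVal F ((u ++ v).map Subtype.val) = wordVal F w + (F ^ w.length) x := by
        rw [List.map_append, humap, wordVal_append, hv]
      change wordVal F ((u ++ v).map Subtype.val) ∈ S at hmem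
      rw [key] at hmem
      exact hmem
    · intro hx
      obtain ⟨v', hv', hval⟩ := hspan x
      set v : List ↥Sig := v'.attach.map (fun y => ⟨y.1, hv' y.1 y.2⟩) with hv
      have hvmap : v.map Subtype.val = v' := by
        simp [hv]
      refine ⟨v, by rw [hvmap, hval], ?_⟩
      have hmem : (u ++ v) ∈ M.accepts := by
        rw [hM]
        have key : wordVal F ((u ++ v).map Subtype.val) = wordVal F w + (F ^ w.length) x := by
          rw [List.map_append, humap, wordVal_append, hvmap, hval]
        show wordVal F ((u ++ v).map Subtype.val) ∈ S
        rw [key]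
        exact hx
      rw [DFA.mem_accepts] at hmem
      have hmem2 : M.evalFrom (M.evalFrom M.start u) v ∈ M.accept := by
        rw [← M.evalFrom_of_append]
        exact hmem
      exact hmem2
  · intro hfin
    set K := {T : Set Γ | ∃ w : List Γ, (∀ y ∈ w, y ∈ Sig) ∧
        T = {x : Γ | wordVal F w + (F ^ w.length) x ∈ S}} with hK
    have hS0 : S ∈ K := by
      refine ⟨[], by simp, ?_⟩
      ext x
      simp [wordVal]
    have hstep : ∀ T ∈ K, ∀ a : Γ, a ∈ Sig → {y : Γ | a + F y ∈ T} ∈ K := by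
      rintro T ⟨w, hw, rfl⟩ a ha
      refine ⟨w ++ [a], ?_, ?_⟩
      · intro y hy
        rcases List.mem_append.1 hy with h | h
        · exact hw y h
        · simpa using (List.mem_singleton.1 h) ▸ ha
      · ext y
        simp only [Set.mem_setOf_eq, wordVal_append, List.length_append, List.length_singleton]
        have h1 : wordVal F [a] = a + F 0 := rfl
        have h2 : (F ^ (w.length + 1)) y = (F ^ w.length) (F y) := by
          rw [pow_succ]; rfl
        rw [h1, map_zero, add_zero, h2, add_assoc, ← map_add]
    set M : DFA ↥Sig ↥K :=
      ⟨fun T a => ⟨{y : Γ | a.1 + F y ∈ T.1}, hstep T.1 T.2 a.1 a.2⟩,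
        ⟨S, hS0⟩, {T | (0 : Γ) ∈ T.1}⟩ with hMdef
    have heval : ∀ u : List ↥Sig,
        (M.eval u).1 = {x : Γ | wordVal F (u.map Subtype.val) + (F ^ u.length) x ∈ S} := by
      intro u
      induction u using List.reverseRecOn with
      | nil =>
          show S = _
          ext x; simp [wordVal]
      | append_singleton u a ih =>
          have h1 : M.eval (u ++ [a]) = M.step (M.eval u) a := M.eval_append_singleton u a
          rw [h1]
          show {y : Γ | a.1 + F y ∈ (M.eval u).1} = _
          rw [ih]
          ext y
          simp only [Set.mem_setOf_eq, List.map_append, wordVal_append, List.length_append,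
            List.length_map, List.length_singleton, List.map_cons, List.map_nil]
          have h2 : wordVal F [a.1] = a.1 + F 0 := rfl
          have h3 : (F ^ (u.length + 1)) y = (F ^ u.length) (F y) := by
            rw [pow_succ]; rfl
          rw [h2, map_zero, add_zero, h3, add_assoc, ← map_add]
    have hacc : M.accepts = {w : List ↥Sig | wordVal F (w.map Subtype.val) ∈ S} := by
      ext u
      rw [DFA.mem_accepts]
      show (0 : Γ) ∈ (M.eval u).1 ↔ _
      rw [heval u, Set.mem_setOf_eq, map_zero, add_zero]
      rfl
    haveI : Finite ↥K := hfin
    obtain ⟨n, ⟨e⟩⟩ := Finite.exists_equiv_fin ↥K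
    exact ⟨Fin n, inferInstance, DFA.reindex e M, by rw [DFA.accepts_reindex]; exact hacc⟩
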